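/- If two distributions p and q on a finite alphabet pair (X,Y) satisfy q = p, then the vCLUB estimator E_{p_{XY}}[log q(Y|X)] - E_{p_X ⊗ p_Y}[log q(Y|X)] exceeds the direct estimator E_{p_{XY}}[log q(Y|X) - log q(Y)] = I^p(X;Y) by exactly E_{p_Y}[log p(Y)] - E_{p_X⊗p_Y}[log p(Y|X)] ≥ 0; hence vCLUB ≥ I^p(X;Y) when q = p. -/
import Mathlib


open BigOperators

noncomputable section

variable {α β : Type*} [Fintype α] [Fintype β]

def marginalX (p : α × β → ℝ) : α → ℝ := fun a => ∑ b, p (a, b)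

def marginalY (p : α × β → ℝ) : β → ℝ := fun b => ∑ a, p (a, b)

/-- Mutual information I^p(X;Y). -/
def mutualInfo (p : α × β → ℝ) : ℝ :=
  ∑ x : α × β, p x * Real.log (p x / (marginalX p x.1 * marginalY p x.2))

/-- The direct estimator with q = p: E_{p_{XY}}[log p(Y|X) - log p(Y)]. -/
def directEstimator (p : α × β → ℝ) : ℝ :=
  ∑ x : α × β, p x * (Real.log (p x / marginalX p x.1) - Real.log (marginalY p x.2))

/-- The vCLUB estimator with q = p:
E_{p_{XY}}[log p(Y|X)] - E_{p_X ⊗ p_Y}[log p(Y|X)]. -/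
def vCLUB (p : α × β → ℝ) : ℝ :=
  (∑ x : α × β, p x * Real.log (p x / marginalX p x.1)) -
  ∑ x : α × β, marginalX p x.1 * marginalY p x.2 * Real.log (p x / marginalX p x.1)

/-- When q = p, the direct estimator equals the true mutual information, the
vCLUB estimator exceeds it by exactly
E_{p_Y}[log p(Y)] - E_{p_X ⊗ p_Y}[log p(Y|X)] ≥ 0, and hence
vCLUB ≥ I^p(X;Y). -/
theorem vCLUB_exceeds_direct (p : α × β → ℝ) (hp : ∀ x, 0 < p x)
    (hpsum : ∑ x, p x = 1) :
    directEstimator p = mutualInfo p ∧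
    vCLUB p - directEstimator p =
      (∑ b, marginalY p b * Real.log (marginalY p b)) -
        ∑ x : α × β, marginalX p x.1 * marginalY p x.2 *
          Real.log (p x / marginalX p x.1) ∧
    0 ≤ vCLUB p - directEstimator p ∧
    mutualInfo p ≤ vCLUB p := by
  have hne : Nonempty (α × β) := by
    by_contra h
    rw [not_nonempty_iff] at h
    simp [Finset.univ_eq_empty] at hpsum
  have hnα : Nonempty α := ⟨hne.some.1⟩
  have hnβ : Nonempty β := ⟨hne.some.2⟩
  have hmX : ∀ a, 0 < marginalX p a := fun a =>
    Finset.sum_pos (fun b _ => hp (a, b)) Finset.univ_nonempty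
  have hmY : ∀ b, 0 < marginalY p b := fun b =>
    Finset.sum_pos (fun a _ => hp (a, b)) Finset.univ_nonempty
  have hwsum : ∑ a, marginalX p a = 1 := by
    rw [← hpsum, Fintype.sum_prod_type]; rfl
  -- Part 1
  have h1 : directEstimator p = mutualInfo p := by
    unfold directEstimator mutualInfo
    refine Finset.sum_congr rfl fun x _ => ?_
    rw [div_mul_eq_div_div, Real.log_div (div_pos (hp x) (hmX x.1)).ne' (hmY x.2).ne']
  -- the cross term
  have hcross : ∑ x : α × β, p x * Real.log (marginalY p x.2)
      = ∑ b, marginalY p b * Real.log (marginalY p b) := by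
    rw [Fintype.sum_prod_type_right]
    refine Finset.sum_congr rfl fun b _ => ?_
    rw [show (∑ a : α, p (a, b) * Real.log (marginalY p (a, b).2))
        = (∑ a : α, p (a, b)) * Real.log (marginalY p b) from (Finset.sum_mul Finset.univ (fun a => p (a, b)) (Real.log (marginalY p b))).symm]
    rfl
  have hdir : directEstimator p =
      (∑ x : α × β, p x * Real.log (p x / marginalX p x.1)) -
        ∑ x : α × β, p x * Real.log (marginalY p x.2) := by
    unfold directEstimator
    rw [← Finset.sum_sub_distrib]
    exact Finset.sum_congr rfl fun x _ => by ring
  -- Part 2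
  have h2 : vCLUB p - directEstimator p =
      (∑ b, marginalY p b * Real.log (marginalY p b)) -
        ∑ x : α × β, marginalX p x.1 * marginalY p x.2 *
          Real.log (p x / marginalX p x.1) := by
    unfold vCLUB
    rw [hdir, ← hcross]
    ring
  -- Jensen
  have jensen : ∀ b, ∑ a, marginalX p a * Real.log (p (a, b) / marginalX p a)
      ≤ Real.log (marginalY p b) := by
    intro b
    have hpt : ∑ a, marginalX p a • (p (a, b) / marginalX p a) = marginalY p b := by
      refine Finset.sum_congr rfl fun a _ => ?_
      rw [smul_eq_mul, mul_comm, div_mul_cancel₀ _ (hmX a).ne']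
    have h := (strictConcaveOn_log_Ioi.concaveOn).le_map_sum (t := Finset.univ)
      (w := fun a => marginalX p a) (p := fun a => p (a, b) / marginalX p a)
      (fun a _ => (hmX a).le) hwsum
      (fun a _ => Set.mem_Ioi.mpr (div_pos (hp _) (hmX a)))
    rw [hpt] at h
    simpa [smul_eq_mul] using h
  -- Part 3
  have h3 : 0 ≤ vCLUB p - directEstimator p := by
    rw [h2, Fintype.sum_prod_type_right, ← Finset.sum_sub_distrib]
    refine Finset.sum_nonneg fun b _ => ?_
    have hfac : ∑ a, marginalX p a * marginalY p b * Real.log (p (a, b) / marginalX p a)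
        = marginalY p b * ∑ a, marginalX p a * Real.log (p (a, b) / marginalX p a) := by
      rw [Finset.mul_sum]
      exact Finset.sum_congr rfl fun a _ => by ring
    rw [hfac]
    have := mul_le_mul_of_nonneg_left (jensen b) (hmY b).le
    linarith
  exact ⟨h1, h2, h3, by linarith [h1, h2, h3]⟩
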